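/- arXiv:2111.04299 — 5 statements merged into one kernel-verified Lean document; each statement's English description precedes it below -/
import Mathlib

section
/- For a hyperbolic triangle with sides of length a, b, c and angle γ opposite the side of length c, if γ ≥ γ₀ > 0 with γ₀ ≤ π/2, then c ≥ a + b + ln((1 - cos γ₀)/4). In particular there is a constant K = K(γ₀) = -ln((1-cos γ₀)/4) such that c ≥ a + b - K. -/
open Real

/-- For a hyperbolic triangle with sides `a, b, c` and angle `γ` opposite `c`
(hyperbolic law of cosines given as hypothesis), if `γ ≥ γ₀ > 0` with `γ₀ ≤ π/2`,
then `c ≥ a + b + log ((1 - cos γ₀)/4)`, i.e. `c ≥ a + b - K` with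
`K = - log ((1 - cos γ₀)/4)`. -/
theorem hyperbolic_triangle_side_lower_bound
    (a b c γ γ₀ : ℝ) (ha : 0 < a) (hb : 0 < b) (hc : 0 < c)
    (hγ : γ ∈ Set.Ioo 0 π) (hγ₀ : 0 < γ₀) (hγ₀' : γ₀ ≤ π / 2) (hγγ₀ : γ₀ ≤ γ)
    (hlaw : Real.cosh c = Real.cosh a * Real.cosh b - Real.sinh a * Real.sinh b * Real.cos γ) :
    c ≥ a + b + Real.log ((1 - Real.cos γ₀) / 4) := by
  have hπ : (0:ℝ) < π := Real.pi_pos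
  -- cos γ ≤ cos γ₀
  have hcoscos : Real.cos γ ≤ Real.cos γ₀ :=
    Real.cos_le_cos_of_nonneg_of_le_pi hγ₀.le hγ.2.le hγγ₀
  -- cos γ₀ < 1
  have hcoslt : Real.cos γ₀ < 1 := by
    have := Real.strictAntiOn_cos (Set.left_mem_Icc.2 hπ.le)
      ⟨hγ₀.le, hγ₀'.trans (by linarith [Real.pi_pos])⟩ hγ₀
    simpa using this
  -- cos γ₀ ≥ 0
  have hcosnn : 0 ≤ Real.cos γ₀ :=
    Real.cos_nonneg_of_mem_Icc ⟨by linarith, hγ₀'⟩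
  have hsinh : 0 ≤ Real.sinh a * Real.sinh b :=
    mul_nonneg (Real.sinh_nonneg_iff.2 ha.le) (Real.sinh_nonneg_iff.2 hb.le)
  -- step 1: cosh c ≥ cosh a cosh b - sinh a sinh b * cos γ₀
  have h1 : Real.cosh a * Real.cosh b - Real.sinh a * Real.sinh b * Real.cos γ₀ ≤ Real.cosh c := by
    rw [hlaw]
    have := mul_le_mul_of_nonneg_left hcoscos hsinh
    linarith
  -- step 2: discard the cos γ₀ (cosh a cosh b - sinh a sinh b) ≥ 0 part
  have hcoshsub : 0 < Real.cosh a * Real.cosh b - Real.sinh a * Real.sinh b := by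
    have := Real.cosh_pos (x := a - b)
    rw [Real.cosh_sub] at this
    linarith
  have h2 : (1 - Real.cos γ₀) * (Real.cosh a * Real.cosh b) ≤ Real.cosh c := by
    have h3 : 0 ≤ Real.cos γ₀ * (Real.cosh a * Real.cosh b - Real.sinh a * Real.sinh b) :=
      mul_nonneg hcosnn hcoshsub.le
    nlinarith
  -- cosh x ≥ exp x / 2
  have hch : ∀ x : ℝ, Real.exp x / 2 ≤ Real.cosh x := by
    intro x
    rw [Real.cosh_eq]
    have := (Real.exp_pos (-x)).le
    linarith
  have hexpab : (1 - Real.cos γ₀) / 4 * Real.exp (a + b) ≤ Real.cosh c := by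
    have h4 := mul_le_mul (hch a) (hch b) (by positivity) (Real.cosh_pos a).le
    have h5 := mul_le_mul_of_nonneg_left h4 (by linarith : (0:ℝ) ≤ 1 - Real.cos γ₀)
    have h6 : (1 - Real.cos γ₀) * (Real.exp a / 2 * (Real.exp b / 2))
        = (1 - Real.cos γ₀) / 4 * Real.exp (a + b) := by
      rw [Real.exp_add]; ring
    calc (1 - Real.cos γ₀) / 4 * Real.exp (a + b)
        = (1 - Real.cos γ₀) * (Real.exp a / 2 * (Real.exp b / 2)) := h6.symm
      _ ≤ (1 - Real.cos γ₀) * (Real.cosh a * Real.cosh b) := h5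
      _ ≤ Real.cosh c := h2
  -- cosh c ≤ exp c
  have hce : Real.cosh c ≤ Real.exp c := by
    have := Real.sinh_nonneg_iff.2 hc.le
    have : Real.cosh c ≤ Real.cosh c + Real.sinh c := by linarith
    simpa [Real.cosh_add_sinh] using this
  have hfinal : Real.exp (Real.log ((1 - Real.cos γ₀) / 4) + (a + b)) ≤ Real.exp c := by
    rw [Real.exp_add, Real.exp_log (by linarith : (0:ℝ) < (1 - Real.cos γ₀) / 4)]
    exact hexpab.trans hce
  have := Real.exp_le_exp.1 hfinal
  linarith
end

section
/- Let C be a Euclidean circle of radius r that intersects the unit circle at right angles and intersects the x-axis at an angle θ > 0 at a point u inside the unit disk lying on the x-axis. Then r = (1 − ‖u‖²)/(2‖u‖ sin θ). -/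
open Real EuclideanGeometry

/-- Let `C` be a Euclidean circle with center `c` and radius `r` that intersects
the unit circle at right angles (`‖c‖² = 1 + r²`) and meets the x-axis at a point
`u ≠ 0` inside the unit disk at an angle `θ ∈ (0, π/2]` (meaning the angle at `u`
in the Euclidean triangle `o, u, c` equals `π/2 + θ`). Then
`r = (1 − ‖u‖²)/(2‖u‖ sin θ)`. -/
theorem radius_of_orthogonal_circle
    (c u : EuclideanSpace ℝ (Fin 2)) (r θ : ℝ) (hr : 0 < r)
    (horth : ‖c‖ ^ 2 = 1 + r ^ 2)
    (huC : dist u c = r) (hu0 : u ≠ 0) (hu1 : ‖u‖ < 1) (hux : u 1 = 0)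
    (hθ : θ ∈ Set.Ioc 0 (π / 2))
    (hangle : EuclideanGeometry.angle (0 : EuclideanSpace ℝ (Fin 2)) u c = π / 2 + θ) :
    r = (1 - ‖u‖ ^ 2) / (2 * ‖u‖ * Real.sin θ) := by
  have hlaw := EuclideanGeometry.law_cos (0 : EuclideanSpace ℝ (Fin 2)) u c
  rw [hangle] at hlaw
  rw [show Real.cos (π / 2 + θ) = -Real.sin θ from by rw [Real.cos_add]; simp] at hlaw
  have h1 : dist (0 : EuclideanSpace ℝ (Fin 2)) c = ‖c‖ := by simp [dist_eq_norm]
  have h2 : dist (0 : EuclideanSpace ℝ (Fin 2)) u = ‖u‖ := by simp [dist_eq_norm]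
  have h3 : dist c u = r := by rw [dist_comm]; exact huC
  rw [h1, h2, h3] at hlaw
  have hu : 0 < ‖u‖ := norm_pos_iff.mpr hu0
  have hs : 0 < Real.sin θ := Real.sin_pos_of_pos_of_lt_pi hθ.1
    (lt_of_le_of_lt hθ.2 (by linarith [Real.pi_pos]))
  have key : 1 = ‖u‖ ^ 2 + 2 * ‖u‖ * r * Real.sin θ := by nlinarith [hlaw, horth]
  field_simp
  nlinarith [key]
end

section
/- Let B₁ = B(c₁,r₁) be a hyperbolic disk and C = ∂B(c₂,r₂) a hyperbolic circle, with d = dist(c₁,c₂). If x lies on C and inside B₁ (i.e. dist(c₁,x) ≤ r₁), then the angle α = ∠c₁c₂x satisfies cos α ≥ 1 − 4·e^{r₁ − r₂ − d}. -/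
open Real

lemma poly_aux (a s t : ℝ) (ha : 1 ≤ a) (hs : 0 < s) (hs1 : s < 1) (ht : 0 < t) (ht1 : t < 1)
    (h : 4*a*s*t ≤ 2) :
    a*(1+s^2)*(1+t^2) - 2*s*t*(a^2+1) - (1-4*a*s*t)*a*(1-s^2)*(1-t^2) ≥ 0 := by
  have hp : 0 < s*t := mul_pos hs ht
  have hst : s*t ≤ 1/2 := by nlinarith
  have h2 : (0:ℝ) ≤ 1 - 2*(s*t)^2 := by nlinarith
  have h3 : (0:ℝ) ≤ 1 - 2*a*s*t := by nlinarith
  nlinarith [mul_nonneg (sub_nonneg.2 ha) h3,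
    sq_nonneg (s-t), sq_nonneg (s*t),
    mul_nonneg (mul_nonneg (sub_nonneg.2 ha) h3) hp.le,
    mul_nonneg (sq_nonneg (s-t)) h3,
    mul_nonneg hp.le h2]

/-- Let `B₁ = B(c₁,r₁)` be a hyperbolic disk and `C = ∂B(c₂,r₂)` a hyperbolic circle,
with `d = dist(c₁,c₂)`. If `x` lies on `C` and inside `B₁`, i.e. `dist(c₁,x) ≤ r₁`,
where `dist(c₁,x)` is given by the hyperbolic law of cosines in the triangle `c₁ c₂ x`
with angle `α` at `c₂`, then `cos α ≥ 1 − 4 e^{r₁ − r₂ − d}`. -/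
theorem cos_angle_ge_of_on_circle_inside_disk
    (r₁ r₂ d dx α : ℝ) (hr₂ : 0 < r₂) (hd : 0 < d) (hdx : 0 ≤ dx)
    (hα : α ∈ Set.Icc 0 π)
    (hlaw : Real.cosh dx =
      Real.cosh r₂ * Real.cosh d - Real.sinh r₂ * Real.sinh d * Real.cos α)
    (hin : dx ≤ r₁) :
    Real.cos α ≥ 1 - 4 * Real.exp (r₁ - r₂ - d) := by
  rcases le_or_gt 2 (4 * Real.exp (r₁ - r₂ - d)) with h2 | h2
  · have := Real.neg_one_le_cos α
    linarith
  · have hr₁ : 0 ≤ r₁ := hdx.trans hin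
    have hE : 0 < Real.sinh r₂ * Real.sinh d :=
      mul_pos (Real.sinh_pos_iff.2 hr₂) (Real.sinh_pos_iff.2 hd)
    have hch : Real.cosh dx ≤ Real.cosh r₁ := by
      rw [Real.cosh_le_cosh, abs_of_nonneg hdx, abs_of_nonneg hr₁]; exact hin
    set a := Real.exp r₁ with hadef
    set S := Real.exp r₂ with hSdef
    set T := Real.exp d with hTdef
    have hap : 0 < a := Real.exp_pos _
    have hSp : 0 < S := Real.exp_pos _
    have hTp : 0 < T := Real.exp_pos _
    have ha : 1 ≤ a := Real.one_le_exp hr₁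
    have hS1 : 1 < S := Real.one_lt_exp_iff.2 hr₂
    have hT1 : 1 < T := Real.one_lt_exp_iff.2 hd
    have heq : Real.exp (r₁ - r₂ - d) = a * S⁻¹ * T⁻¹ := by
      rw [Real.exp_sub, Real.exp_sub, ← hadef, ← hSdef, ← hTdef]
      field_simp
    have hs : 0 < S⁻¹ := inv_pos.2 hSp
    have ht : 0 < T⁻¹ := inv_pos.2 hTp
    have hs1 : S⁻¹ < 1 := inv_lt_one_of_one_lt₀ hS1
    have ht1 : T⁻¹ < 1 := inv_lt_one_of_one_lt₀ hT1
    have hpoly := poly_aux a S⁻¹ T⁻¹ ha hs hs1 ht ht1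
      (by rw [show (4:ℝ)*a*S⁻¹*T⁻¹ = 4*(a*S⁻¹*T⁻¹) by ring, ← heq]; linarith)
    have key : Real.cosh r₂ * Real.cosh d - Real.cosh r₁ ≥
        (1 - 4 * Real.exp (r₁ - r₂ - d)) * (Real.sinh r₂ * Real.sinh d) := by
      rw [Real.cosh_eq, Real.cosh_eq, Real.cosh_eq, Real.sinh_eq, Real.sinh_eq,
        Real.exp_neg, Real.exp_neg, Real.exp_neg, heq, ← hadef, ← hSdef, ← hTdef,
        ge_iff_le, ← sub_nonneg]
      have hid : (S + S⁻¹) / 2 * ((T + T⁻¹) / 2) - (a + a⁻¹) / 2 -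
          (1 - 4 * (a * S⁻¹ * T⁻¹)) * ((S - S⁻¹) / 2 * ((T - T⁻¹) / 2)) =
          (a*(1+(S⁻¹)^2)*(1+(T⁻¹)^2) - 2*S⁻¹*T⁻¹*(a^2+1)
            - (1-4*a*S⁻¹*T⁻¹)*a*(1-(S⁻¹)^2)*(1-(T⁻¹)^2)) * (S*T/(4*a)) := by
        field_simp
        ring
      rw [hid]
      positivity
    have hmul : (Real.sinh r₂ * Real.sinh d) * (1 - 4 * Real.exp (r₁ - r₂ - d)) ≤
        (Real.sinh r₂ * Real.sinh d) * Real.cos α := by nlinarith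
    have := (mul_le_mul_iff_right₀ hE).mp hmul
    linarith
end

section
/- For points x₁, x₂ in the hyperbolic plane, with ρᵢ = dist(o,xᵢ) and γ = ∠x₁ o x₂ ∈ (0, π], we have 2π·exp((dist(x₁,x₂) − ρ₁ − ρ₂)/2) > γ. Equivalently, e^{dist(x₁,x₂)} > (1/(4π²))·e^{ρ₁+ρ₂}·γ². -/
open Real

private lemma one_sub_cos_ge (γ : ℝ) (h0 : 0 < γ) (h2 : γ < π / 2) :
    γ ^ 2 / π ≤ 1 - Real.cos γ := by
  have hπ : π < 3.15 := by
    have := Real.pi_lt_d2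
    linarith
  have hπ3 : 3 < π := Real.pi_gt_three
  have hπ0 : 0 < π := Real.pi_pos
  set t := γ / 2 with ht
  have ht0 : 0 < t := by positivity
  have htπ : t < π / 4 := by rw [ht]; linarith
  have ht1 : t ≤ 1 := by nlinarith
  have hs := Real.sin_gt_sub_cube ht0
  have hcos : Real.cos γ = 1 - 2 * Real.sin t ^ 2 := by
    have h2t : γ = 2 * t := by rw [ht]; ring
    rw [h2t, Real.cos_two_mul, Real.cos_sq']
    ring
  rw [hcos]
  have ht2 : t ^ 2 ≤ 0.63 := by nlinarith
  have hlb : 0.84 * t ≤ Real.sin t := by nlinarith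
  have hsq : (0.84 * t) ^ 2 ≤ Real.sin t ^ 2 := by
    apply pow_le_pow_left₀ (by positivity) hlb
  rw [div_le_iff₀ hπ0]
  have hγ2t : γ = 2 * t := by rw [ht]; ring
  rw [hγ2t]
  nlinarith [sq_nonneg t]

/-- For points `x₁, x₂` in the hyperbolic plane with `ρᵢ = dist(o,xᵢ)`, angle
`γ = ∠x₁ o x₂ ∈ (0, π]` at the origin, and `D = dist(x₁,x₂)` given by the hyperbolic
law of cosines, we have `2π · exp((D − ρ₁ − ρ₂)/2) > γ`, and equivalently
`e^D > (1/(4π²)) e^{ρ₁+ρ₂} γ²`. -/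
theorem distH_vs_angle
    (ρ₁ ρ₂ D γ : ℝ) (hρ₁ : 0 ≤ ρ₁) (hρ₂ : 0 ≤ ρ₂) (hD : 0 ≤ D)
    (hγ : γ ∈ Set.Ioc 0 π)
    (hlaw : Real.cosh D =
      Real.cosh ρ₁ * Real.cosh ρ₂ - Real.cos γ * (Real.sinh ρ₁ * Real.sinh ρ₂)) :
    2 * π * Real.exp ((D - ρ₁ - ρ₂) / 2) > γ ∧
      Real.exp D > (1 / (4 * π ^ 2)) * Real.exp (ρ₁ + ρ₂) * γ ^ 2 := by
  obtain ⟨hγ0, hγπ⟩ := hγ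
  have hπ : 0 < π := Real.pi_pos
  -- basic hyperbolic facts
  have hcc : Real.exp (ρ₁ + ρ₂) / 4 < Real.cosh ρ₁ * Real.cosh ρ₂ := by
    rw [Real.cosh_eq, Real.cosh_eq, Real.exp_add]
    nlinarith [Real.exp_pos ρ₁, Real.exp_pos ρ₂, Real.exp_pos (-ρ₁), Real.exp_pos (-ρ₂),
      mul_pos (Real.exp_pos ρ₁) (Real.exp_pos (-ρ₂)),
      mul_pos (Real.exp_pos (-ρ₁)) (Real.exp_pos ρ₂),
      mul_pos (Real.exp_pos (-ρ₁)) (Real.exp_pos (-ρ₂))]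
  have hss0 : 0 ≤ Real.sinh ρ₁ * Real.sinh ρ₂ :=
    mul_nonneg (Real.sinh_nonneg_iff.mpr hρ₁) (Real.sinh_nonneg_iff.mpr hρ₂)
  have hss : Real.sinh ρ₁ * Real.sinh ρ₂ ≤ Real.cosh ρ₁ * Real.cosh ρ₂ := by
    rw [Real.sinh_eq, Real.sinh_eq, Real.cosh_eq, Real.cosh_eq]
    nlinarith [mul_pos (Real.exp_pos ρ₁) (Real.exp_pos (-ρ₂)),
      mul_pos (Real.exp_pos (-ρ₁)) (Real.exp_pos ρ₂)]
  have hexpD : Real.cosh D ≤ Real.exp D := by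
    rw [Real.cosh_eq]
    have : Real.exp (-D) ≤ Real.exp D := Real.exp_le_exp.mpr (by linarith)
    linarith
  have hE : 0 < Real.exp (ρ₁ + ρ₂) := Real.exp_pos _
  -- key inequality
  have key : Real.exp D > (1 / (4 * π ^ 2)) * Real.exp (ρ₁ + ρ₂) * γ ^ 2 := by
    rcases le_or_gt (Real.cos γ) 0 with hc | hc
    · -- cos γ ≤ 0
      have h1 : Real.cosh ρ₁ * Real.cosh ρ₂ ≤ Real.cosh D := by
        rw [hlaw]; nlinarith
      have hγ2 : γ ^ 2 ≤ π ^ 2 := by nlinarith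
      have hD4 : Real.exp (ρ₁ + ρ₂) / 4 < Real.exp D := by linarith
      have hmul : Real.exp (ρ₁ + ρ₂) / 4 * (4 * π ^ 2) < Real.exp D * (4 * π ^ 2) :=
        mul_lt_mul_of_pos_right hD4 (by positivity)
      have hle : (1 / (4 * π ^ 2)) * Real.exp (ρ₁ + ρ₂) * γ ^ 2 ≤
          Real.exp (ρ₁ + ρ₂) / 4 := by
        rw [div_mul_eq_mul_div, div_mul_eq_mul_div, div_le_div_iff₀ (by positivity) (by norm_num)]
        nlinarith [mul_nonneg hE.le (sq_nonneg γ)]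
      nlinarith
    · -- cos γ > 0, hence γ < π/2
      have hγhalf : γ < π / 2 := by
        by_contra h
        push_neg at h
        have : Real.cos γ ≤ 0 := Real.cos_nonpos_of_pi_div_two_le_of_le h (by linarith)
        linarith
      have hlem := one_sub_cos_ge γ hγ0 hγhalf
      have hc1 : Real.cos γ ≤ 1 := Real.cos_le_one γ
      have h1 : Real.cosh ρ₁ * Real.cosh ρ₂ * (1 - Real.cos γ) ≤ Real.cosh D := by
        rw [hlaw]; nlinarith
      have h2 : Real.exp (ρ₁ + ρ₂) / 4 * (γ ^ 2 / π) ≤ Real.cosh D := by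
      -- monotonicity
        have h1c : 0 ≤ 1 - Real.cos γ := by linarith
        calc Real.exp (ρ₁ + ρ₂) / 4 * (γ ^ 2 / π)
            ≤ Real.exp (ρ₁ + ρ₂) / 4 * (1 - Real.cos γ) :=
              mul_le_mul_of_nonneg_left hlem (by positivity)
          _ ≤ Real.cosh ρ₁ * Real.cosh ρ₂ * (1 - Real.cos γ) :=
              mul_le_mul_of_nonneg_right (le_of_lt hcc) h1c
          _ ≤ Real.cosh D := h1
      have hπ1 : 1 < π := by nlinarith [Real.pi_gt_three]
      have hπ2 : (1 / (4 * π ^ 2)) * Real.exp (ρ₁ + ρ₂) * γ ^ 2 <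
          Real.exp (ρ₁ + ρ₂) / 4 * (γ ^ 2 / π) := by
        rw [show (1 / (4 * π ^ 2)) * Real.exp (ρ₁ + ρ₂) * γ ^ 2
            = Real.exp (ρ₁ + ρ₂) * γ ^ 2 / (4 * π ^ 2) by ring,
          show Real.exp (ρ₁ + ρ₂) / 4 * (γ ^ 2 / π) = Real.exp (ρ₁ + ρ₂) * γ ^ 2 / (4 * π) by ring]
        apply div_lt_div_of_pos_left (by positivity) (by positivity)
        nlinarith
      linarith
  refine ⟨?_, key⟩
  -- derive the first inequality from the second
  have hA : 0 < Real.exp ((D - ρ₁ - ρ₂) / 2) := Real.exp_pos _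
  have h4 : γ ^ 2 * Real.exp (ρ₁ + ρ₂) < 4 * π ^ 2 * Real.exp D := by
    have hmul := mul_lt_mul_of_pos_left key (show (0:ℝ) < 4 * π ^ 2 by positivity)
    have heq : 4 * π ^ 2 * ((1 / (4 * π ^ 2)) * Real.exp (ρ₁ + ρ₂) * γ ^ 2)
        = γ ^ 2 * Real.exp (ρ₁ + ρ₂) := by
      field_simp
    linarith [heq ▸ hmul]
  have hA2 : Real.exp ((D - ρ₁ - ρ₂) / 2) ^ 2 = Real.exp (D - (ρ₁ + ρ₂)) := by
    rw [sq, ← Real.exp_add]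
    ring_nf
  have hsq : γ ^ 2 < (2 * π * Real.exp ((D - ρ₁ - ρ₂) / 2)) ^ 2 := by
    have hexpand : (2 * π * Real.exp ((D - ρ₁ - ρ₂) / 2)) ^ 2
        = 4 * π ^ 2 * Real.exp (D - (ρ₁ + ρ₂)) := by
      rw [← hA2]; ring
    rw [hexpand, Real.exp_sub, ← mul_div_assoc, lt_div_iff₀ hE]
    linarith
  exact lt_of_pow_lt_pow_left₀ 2 (by positivity) hsq
end

section
/- There is a universal constant K > 0 such that: for hyperbolic disks B₁ = B(c₁,r₁), B₂ = B(c₂,r₂) and a point p with dist(p,c₂) = r₂, if B₁ ∩ B₂ ≠ ∅ (equivalently dist(c₁,c₂) < r₁ + r₂), then either dist(p,c₁) < r₁ + K or the angle ∠c₁ p c₂ < 10·exp((r₁ − dist(p,c₁))/2). -/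
open Real

lemma sinh_ge_exp_div_three {x : ℝ} (hx : 1 ≤ x) : Real.exp x / 3 ≤ Real.sinh x := by
  rw [Real.sinh_eq]
  have h1 : Real.exp (-x) ≤ Real.exp (-1) := Real.exp_le_exp.mpr (by linarith)
  have h2 : Real.exp 1 ≤ Real.exp x := Real.exp_le_exp.mpr hx
  have h3 : Real.exp (-1) * Real.exp 1 = 1 := by rw [← Real.exp_add]; norm_num
  have he : (2 : ℝ) < Real.exp 1 := by
    have := Real.exp_one_gt_d9; linarith
  nlinarith [Real.exp_pos (-1), Real.exp_pos (-x), Real.exp_pos x]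

set_option maxHeartbeats 1600000 in
/-- There is a universal constant `K > 0` such that: for hyperbolic disks
`B₁ = B(c₁,r₁)`, `B₂ = B(c₂,r₂)` and a point `p` with `dist(p,c₂) = r₂`,
if `B₁ ∩ B₂ ≠ ∅`, i.e. `d = dist(c₁,c₂) < r₁ + r₂`, then writing `ρ = dist(p,c₁)`
and `α = ∠c₁ p c₂` (so that `cosh d = cosh ρ cosh r₂ − sinh ρ sinh r₂ cos α` by the
hyperbolic law of cosines), either `ρ < r₁ + K` or `α < 10 exp((r₁ − ρ)/2)`. -/
theorem intersecting_disks_angle_bound :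
    ∃ K > (0 : ℝ), ∀ r₁ r₂ d ρ α : ℝ, 0 < ρ → 0 < r₂ → 0 ≤ d →
      α ∈ Set.Ioo 0 π →
      Real.cosh d = Real.cosh ρ * Real.cosh r₂ - Real.sinh ρ * Real.sinh r₂ * Real.cos α →
      d < r₁ + r₂ →
      ρ < r₁ + K ∨ α < 10 * Real.exp ((r₁ - ρ) / 2) := by
  refine ⟨2, by norm_num, fun r₁ r₂ d ρ α hρ hr₂ hd hα h hlt => ?_⟩
  obtain ⟨hα0, hαπ⟩ := hα
  by_cases hcase : ρ < r₁ + 2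
  · exact Or.inl hcase
  push_neg at hcase
  right
  by_contra hcon
  push_neg at hcon
  have hsρ : 0 < Real.sinh ρ := Real.sinh_pos_iff.mpr hρ
  have hsr : 0 < Real.sinh r₂ := Real.sinh_pos_iff.mpr hr₂
  have hcos1 : Real.cos α ≤ 1 := Real.cos_le_one α
  -- d ≥ |ρ - r₂|
  have hkey : Real.cosh (ρ - r₂) ≤ Real.cosh d := by
    rw [Real.cosh_sub, h]
    nlinarith [mul_nonneg (mul_pos hsρ hsr).le (by linarith : (0:ℝ) ≤ 1 - Real.cos α)]
  have habs : |ρ - r₂| ≤ d := by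
    have := Real.cosh_le_cosh.mp hkey
    rwa [abs_of_nonneg hd] at this
  have hF1 : ρ - r₂ ≤ d := (le_abs_self _).trans habs
  have hF2 : r₂ - ρ ≤ d := by
    have : r₂ - ρ ≤ |ρ - r₂| := by rw [abs_sub_comm]; exact le_abs_self _
    linarith
  have hr₂1 : 1 < r₂ := by linarith
  have hρ1 : 1 < ρ := by linarith
  -- Jordan's inequality
  have hjordan : Real.cos α ≤ 1 - 2 / π ^ 2 * α ^ 2 :=
    Real.cos_le_one_sub_mul_cos_sq (by rw [abs_of_pos hα0]; exact hαπ.le)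
  have hexp2 : Real.exp ((r₁ - ρ) / 2) * Real.exp ((r₁ - ρ) / 2) = Real.exp (r₁ - ρ) := by
    rw [← Real.exp_add]; ring_nf
  have hα2 : 100 * Real.exp (r₁ - ρ) ≤ α ^ 2 := by
    nlinarith [Real.exp_pos ((r₁ - ρ) / 2)]
  have hπ0 : 0 < π := Real.pi_pos
  have h1mc : 200 / π ^ 2 * Real.exp (r₁ - ρ) ≤ 1 - Real.cos α := by
    have h' : 2 / π ^ 2 * (100 * Real.exp (r₁ - ρ)) ≤ 2 / π ^ 2 * α ^ 2 :=
      mul_le_mul_of_nonneg_left hα2 (by positivity)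
    have heq : 2 / π ^ 2 * (100 * Real.exp (r₁ - ρ)) = 200 / π ^ 2 * Real.exp (r₁ - ρ) := by
      ring
    linarith
  have hsinhρ : Real.exp ρ / 3 ≤ Real.sinh ρ := sinh_ge_exp_div_three hρ1.le
  have hsinhr : Real.exp r₂ / 3 ≤ Real.sinh r₂ := sinh_ge_exp_div_three hr₂1.le
  have hcoshd : Real.cosh d ≤ Real.exp (r₁ + r₂) := by
    have h1 : Real.exp (-d) ≤ Real.exp d := Real.exp_le_exp.mpr (by linarith)
    have h2 : Real.exp d ≤ Real.exp (r₁ + r₂) := Real.exp_le_exp.mpr hlt.le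
    rw [Real.cosh_eq]; linarith
  have hId : Real.cosh d
      = Real.cosh (ρ - r₂) + Real.sinh ρ * Real.sinh r₂ * (1 - Real.cos α) := by
    rw [Real.cosh_sub, h]; ring
  have hch1 : (1 : ℝ) ≤ Real.cosh (ρ - r₂) := Real.one_le_cosh _
  have hE : Real.exp ρ * Real.exp r₂ * Real.exp (r₁ - ρ) = Real.exp (r₁ + r₂) := by
    rw [← Real.exp_add, ← Real.exp_add]; ring_nf
  have hπ : π < 3.15 := Real.pi_lt_d2
  -- combine: cosh d ≥ (200/(9π²)) e^{r₁+r₂} but cosh d ≤ e^{r₁+r₂}, contradiction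
  have hprod : Real.exp ρ / 3 * (Real.exp r₂ / 3) * (200 / π ^ 2 * Real.exp (r₁ - ρ))
      ≤ Real.sinh ρ * Real.sinh r₂ * (1 - Real.cos α) := by
    have h0 : 0 < Real.exp ρ / 3 := by positivity
    have h1 : 0 < Real.exp r₂ / 3 := by positivity
    have h2 : 0 < 200 / π ^ 2 * Real.exp (r₁ - ρ) := by positivity
    have hcos' : 0 < 1 - Real.cos α := lt_of_lt_of_le h2 h1mc
    have s1 : Real.exp ρ / 3 * (Real.exp r₂ / 3) ≤ Real.sinh ρ * Real.sinh r₂ :=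
      mul_le_mul hsinhρ hsinhr h1.le hsρ.le
    exact mul_le_mul s1 h1mc h2.le (mul_nonneg hsρ.le hsr.le)
  have hbig : 200 / (9 * π ^ 2) * Real.exp (r₁ + r₂) ≤ Real.cosh d := by
    have heq : Real.exp ρ / 3 * (Real.exp r₂ / 3) * (200 / π ^ 2 * Real.exp (r₁ - ρ))
        = 200 / (9 * π ^ 2) * (Real.exp ρ * Real.exp r₂ * Real.exp (r₁ - ρ)) := by
      ring
    rw [hE] at heq
    linarith [hId, hch1, hprod]
  have hEpos : 0 < Real.exp (r₁ + r₂) := Real.exp_pos _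
  have hc : (1 : ℝ) < 200 / (9 * π ^ 2) := by
    rw [lt_div_iff₀ (by positivity)]
    nlinarith [hπ, hπ0]
  nlinarith [hc, hEpos, hbig, hcoshd]
end
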